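/- If a subset S of a finite group G meets every conjugacy class of G, then the subgroup generated by S is all of G. -/

import Mathlib

/-- If a subset `S` of a finite group `G` meets every conjugacy class of `G`,
then the subgroup generated by `S` is all of `G`. -/
theorem stmt_1 (G : Type*) [Group G] [Finite G] (S : Set G)
    (hS : ∀ g : G, ∃ s ∈ S, IsConj s g) :
    Subgroup.closure S = ⊤ := by
  classical
  cases nonempty_fintype G
  set H := Subgroup.closure S with hH
  -- every element of G lies in some conjugate of H, indexed by the coset of the conjugator
  have cover : ∀ g : G, ∃ x : G, x⁻¹ * g * x ∈ H := by
    intro g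
    obtain ⟨s, hs, hc⟩ := hS g
    obtain ⟨c, hc⟩ := isConj_iff.mp hc
    refine ⟨c, ?_⟩
    have : c⁻¹ * g * c = s := by
      rw [← hc]; group
    rw [this]
    exact Subgroup.subset_closure hs
  -- the conjugate of H indexed by a coset, as a finset
  let T : G ⧸ H → Finset G := fun c =>
    Finset.univ.filter (fun g => (Quotient.out c)⁻¹ * g * Quotient.out c ∈ H)
  -- each T c has cardinality that of H
  have hTcard : ∀ c : G ⧸ H, (T c).card = Fintype.card H := by
    intro c
    rw [Fintype.card_subtype]
    apply Finset.card_bij (fun g _ => (Quotient.out c)⁻¹ * g * Quotient.out c)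
    · intro a ha
      simp only [T, Finset.mem_filter] at ha ⊢
      exact ⟨Finset.mem_univ _, ha.2⟩
    · intro a ha b hb hab
      exact mul_left_cancel (mul_right_cancel hab)
    · intro b hb
      refine ⟨Quotient.out c * b * (Quotient.out c)⁻¹, ?_, by group⟩
      simp only [T, Finset.mem_filter] at hb ⊢
      refine ⟨Finset.mem_univ _, ?_⟩
      have : (Quotient.out c)⁻¹ * (Quotient.out c * b * (Quotient.out c)⁻¹) *
          Quotient.out c = b := by group
      rw [this]; exact hb.2
  -- 1 belongs to every T c
  have hone : ∀ c : G ⧸ H, (1 : G) ∈ T c := by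
    intro c
    simp only [T, Finset.mem_filter]
    exact ⟨Finset.mem_univ _, by simpa using H.one_mem⟩
  -- G is covered by the T c
  have hcov : (Finset.univ : Finset G) ⊆
      Finset.univ.biUnion (fun c : G ⧸ H => T c) := by
    intro g _
    obtain ⟨x, hx⟩ := cover g
    rw [Finset.mem_biUnion]
    refine ⟨QuotientGroup.mk x, Finset.mem_univ _, ?_⟩
    simp only [T, Finset.mem_filter]
    refine ⟨Finset.mem_univ _, ?_⟩
    set y := Quotient.out (QuotientGroup.mk x : G ⧸ H) with hy
    have hyx : (QuotientGroup.mk y : G ⧸ H) = QuotientGroup.mk x := by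
      rw [hy]; exact Quotient.out_eq' _
    have hmem : x⁻¹ * y ∈ H := by
      rw [← QuotientGroup.eq]; exact hyx.symm
    have : y⁻¹ * g * y = (x⁻¹ * y)⁻¹ * (x⁻¹ * g * x) * (x⁻¹ * y) := by group
    rw [this]
    exact H.mul_mem (H.mul_mem (H.inv_mem hmem) hx) hmem
  -- refined cover: G \ {1} is covered by the (T c).erase 1
  have hcov2 : (Finset.univ : Finset G) ⊆
      insert (1 : G) (Finset.univ.biUnion (fun c : G ⧸ H => (T c).erase 1)) := by
    intro g hg
    rcases eq_or_ne g 1 with rfl | hg1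
    · exact Finset.mem_insert_self _ _
    · have := hcov hg
      rw [Finset.mem_biUnion] at this
      obtain ⟨c, _, hc⟩ := this
      refine Finset.mem_insert_of_mem ?_
      rw [Finset.mem_biUnion]
      exact ⟨c, Finset.mem_univ _, Finset.mem_erase.2 ⟨hg1, hc⟩⟩
  -- counting
  set n := Fintype.card (G ⧸ H) with hn
  set h := Fintype.card H with hh
  have hcardG : Fintype.card G = n * h := by
    simpa [Nat.card_eq_fintype_card] using Subgroup.card_eq_card_quotient_mul_card_subgroup H
  have hcount : Fintype.card G ≤ 1 + n * (h - 1) := by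
    calc Fintype.card G = (Finset.univ : Finset G).card := (Finset.card_univ).symm
      _ ≤ (insert (1 : G) (Finset.univ.biUnion
            (fun c : G ⧸ H => (T c).erase 1))).card := Finset.card_le_card hcov2
      _ ≤ 1 + (Finset.univ.biUnion (fun c : G ⧸ H => (T c).erase 1)).card :=
          (Finset.card_insert_le _ _).trans (by omega)
      _ ≤ 1 + ∑ c : G ⧸ H, ((T c).erase 1).card := by
          exact Nat.add_le_add_left Finset.card_biUnion_le _
      _ ≤ 1 + ∑ _c : G ⧸ H, (h - 1) := by
          refine Nat.add_le_add_left (Finset.sum_le_sum fun c _ => ?_) _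
          rw [Finset.card_erase_of_mem (hone c), hTcard c]
      _ = 1 + n * (h - 1) := by
          rw [Finset.sum_const, Finset.card_univ, smul_eq_mul]
  have hhpos : 1 ≤ h := Fintype.card_pos
  have hnpos : 1 ≤ n := Fintype.card_pos
  have hsplit : n * h = n * (h - 1) + n := by
    have : h = (h - 1) + 1 := by omega
    rw [this, Nat.mul_add, mul_one]
    congr 1
  have hn1 : n = 1 := by
    rw [hcardG, hsplit] at hcount
    omega
  have hidx : H.index = 1 := by
    rw [Subgroup.index, Nat.card_eq_fintype_card, ← hn, hn1]
  exact Subgroup.index_eq_one.mp hidx
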